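/- For every integer n ≥ 1, the sets of natural expansions of L_{2n+1} and of L_{2n} are finite, ν(L_{2n+1}) = 1, and ν(L_{2n}) = 2n. -/

import Mathlib

/-- The golden ratio φ = (1+√5)/2. -/
noncomputable def phi : ℝ := (1 + Real.sqrt 5) / 2

/-- `a` is a finite φ-representation of the real number `x`: a finitely supported
function `a : ℤ → {0,1}` with `x = Σ_{i ∈ ℤ} a(i) · φ^i`. -/
def IsPhiRep (x : ℝ) (a : ℤ →₀ ℕ) : Prop :=
  (∀ i, a i ≤ 1) ∧ x = ∑ i ∈ a.support, (a i : ℝ) * phi ^ i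

/-- `a` is the canonical φ-representation of `x`: a finite φ-representation with
no two adjacent digits equal to 1. -/
def IsCanonRep (x : ℝ) (a : ℤ →₀ ℕ) : Prop :=
  IsPhiRep x a ∧ ∀ i : ℤ, a i * a (i + 1) = 0

/-- Given the family `d` of canonical φ-representations, `naturalSet d m` is the set
of natural expansions of `m`: finite φ-representations `a` of `m` whose minimal index
with a nonzero digit coincides with that of the canonical φ-representation `d m`. -/
def naturalSet (d : ℕ → ℤ →₀ ℕ) (m : ℕ) : Set (ℤ →₀ ℕ) :=
  {a | IsPhiRep m a ∧
    ∃ j : ℤ, (a j ≠ 0 ∧ ∀ i : ℤ, a i ≠ 0 → j ≤ i) ∧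
      (d m j ≠ 0 ∧ ∀ i : ℤ, d m i ≠ 0 → j ≤ i)}

/-- Lucas numbers: L₀ = 2, L₁ = 1, L_{n+2} = L_{n+1} + L_n. -/
def lucas : ℕ → ℕ
  | 0 => 2
  | 1 => 1
  | n + 2 => lucas (n + 1) + lucas n

lemma sqrt5_pos : (0:ℝ) < Real.sqrt 5 := Real.sqrt_pos.mpr (by norm_num)
lemma sqrt5_sq : Real.sqrt 5 ^ 2 = 5 := Real.sq_sqrt (by norm_num)
lemma one_lt_phi : 1 < phi := by
  unfold phi
  nlinarith [Real.sq_sqrt (by norm_num : (5:ℝ) ≥ 0), Real.sqrt_nonneg 5]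
lemma phi_pos : 0 < phi := lt_trans one_pos one_lt_phi
lemma phi_ne_zero : phi ≠ 0 := ne_of_gt phi_pos
lemma phi_sq : phi ^ 2 = phi + 1 := by
  unfold phi
  have h := Real.sq_sqrt (by norm_num : (5:ℝ) ≥ 0)
  ring_nf
  nlinarith [h]
lemma phi_zpow_rec (i : ℤ) : phi ^ (i + 2) = phi ^ (i + 1) + phi ^ i := by
  have h1 : phi ^ (i+2) = phi ^ i * phi ^ 2 := by
    rw [← zpow_natCast phi 2, ← zpow_add₀ phi_ne_zero]; norm_num
  have h2 : phi ^ (i+1) = phi ^ i * phi := by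
    rw [zpow_add₀ phi_ne_zero, zpow_one]
  rw [h1, h2, phi_sq]; ring
lemma phi_zpow_pos (i : ℤ) : 0 < phi ^ i := zpow_pos phi_pos i
lemma phi_zpow_lt {i j : ℤ} (h : i < j) : phi ^ i < phi ^ j :=
  zpow_lt_zpow_right₀ one_lt_phi h
lemma phi_zpow_le {i j : ℤ} (h : i ≤ j) : phi ^ i ≤ phi ^ j :=
  zpow_le_zpow_right₀ (le_of_lt one_lt_phi) h


noncomputable def psi : ℝ := (1 - Real.sqrt 5) / 2

lemma psi_sq : psi ^ 2 = psi + 1 := by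
  unfold psi
  have h := Real.sq_sqrt (by norm_num : (5:ℝ) ≥ 0)
  ring_nf
  nlinarith [h]

lemma phi_mul_psi : phi * psi = -1 := by
  unfold phi psi
  have h := Real.sq_sqrt (by norm_num : (5:ℝ) ≥ 0)
  nlinarith [h]

lemma lucas_real : ∀ m : ℕ, ((lucas m : ℕ) : ℝ) = phi ^ m + psi ^ m
  | 0 => by norm_num [lucas]
  | 1 => by
      simp [lucas]
      unfold phi psi
      ring
  | (m+2) => by
      rw [show lucas (m+2) = lucas (m+1) + lucas m from rfl]
      push_cast
      rw [lucas_real (m+1), lucas_real m]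
      have h1 : phi ^ (m+2) = phi ^ (m+1) + phi ^ m := by
        have : phi ^ (m+2) = phi ^ m * phi ^ 2 := by ring
        rw [this, phi_sq]; ring
      have h2 : psi ^ (m+2) = psi ^ (m+1) + psi ^ m := by
        have : psi ^ (m+2) = psi ^ m * psi ^ 2 := by ring
        rw [this, psi_sq]; ring
      rw [h1, h2]; ring

lemma psi_eq : psi = -phi⁻¹ := by
  rw [inv_eq_one_div, ← neg_div, eq_div_iff phi_ne_zero]
  linarith [phi_mul_psi]

lemma psi_pow (k : ℕ) : psi ^ k = (-1)^k * phi ^ (-(k:ℤ)) := by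
  rw [psi_eq, neg_pow]
  rw [← zpow_natCast phi⁻¹ k, inv_zpow, ← zpow_neg]

lemma psi_pow_even (n : ℕ) : psi ^ (2*n) = phi ^ (-(2*(n:ℤ))) := by
  rw [psi_pow]
  rw [pow_mul]
  push_cast
  norm_num

lemma psi_pow_odd (n : ℕ) : psi ^ (2*n+1) = -phi ^ (-(2*(n:ℤ))-1) := by
  rw [psi_pow]
  rw [pow_succ, pow_mul]
  push_cast
  rw [show -(2*(n:ℤ) + 1) = -(2*(n:ℤ)) - 1 by ring]
  norm_num

lemma lucas_even_real (n : ℕ) : ((lucas (2*n) : ℕ) : ℝ) = phi ^ (2*(n:ℤ)) + phi ^ (-(2*(n:ℤ))) := by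
  rw [lucas_real, psi_pow_even, ← zpow_natCast phi (2*n)]
  norm_cast

lemma lucas_odd_real (n : ℕ) : ((lucas (2*n+1) : ℕ) : ℝ) = phi ^ (2*(n:ℤ)+1) - phi ^ (-(2*(n:ℤ))-1) := by
  rw [lucas_real, psi_pow_odd, ← zpow_natCast phi (2*n+1)]
  push_cast
  ring


noncomputable def sval (S : Finset ℤ) : ℝ := ∑ i ∈ S, phi ^ i

lemma sval_def (S : Finset ℤ) : sval S = ∑ i ∈ S, phi ^ i := rfl

lemma sval_empty : sval ∅ = 0 := by simp [sval_def]

lemma sval_nonneg (S : Finset ℤ) : 0 ≤ sval S :=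
  Finset.sum_nonneg fun i _ => (phi_zpow_pos i).le

lemma sval_erase {S : Finset ℤ} {M : ℤ} (h : M ∈ S) :
    sval S = phi ^ M + sval (S.erase M) := (Finset.add_sum_erase S _ h).symm

lemma sval_pos {S : Finset ℤ} (h : S.Nonempty) : 0 < sval S := by
  obtain ⟨i, hi⟩ := h
  rw [sval_erase hi]
  have := sval_nonneg (S.erase i); have := phi_zpow_pos i; linarith

lemma le_sval_of_mem {S : Finset ℤ} {M : ℤ} (h : M ∈ S) : phi ^ M ≤ sval S := by
  rw [sval_erase h]; have := sval_nonneg (S.erase M); linarith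

lemma sval_icc (j K : ℤ) (h : j ≤ K) :
    sval (Finset.Icc j K) = phi ^ (K + 2) - phi ^ (j + 1) := by
  obtain ⟨t, rfl⟩ : ∃ t : ℕ, K = j + t := ⟨(K - j).toNat, by omega⟩
  clear h
  induction t with
  | zero =>
    rw [show j + (0:ℕ) = j by omega, Finset.Icc_self]
    have := phi_zpow_rec j
    simp [sval]; linarith
  | succ t ih =>
    have h1 : Finset.Icc j (j + (t+1:ℕ)) = insert (j + (t:ℕ) + 1) (Finset.Icc j (j + (t:ℕ))) := by
      ext x; simp [Finset.mem_Icc]; omega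
    have h2 : (j + (t:ℕ) + 1) ∉ Finset.Icc j (j + (t:ℕ)) := by
      simp [Finset.mem_Icc]
    rw [h1, sval, Finset.sum_insert h2, ← sval, ih]
    have e1 := phi_zpow_rec (j + t + 1)
    rw [show j + (t:ℕ) + 1 + 2 = j + (t+1:ℕ) + 2 by push_cast; ring,
        show j + (t:ℕ) + 1 + 1 = j + (t:ℕ) + 2 by ring] at e1
    linarith

lemma sval_subset {S T : Finset ℤ} (h : S ⊆ T) : sval S ≤ sval T :=
  Finset.sum_le_sum_of_subset_of_nonneg h fun i _ _ => (phi_zpow_pos i).le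

lemma sval_upper {S : Finset ℤ} {j K : ℤ} (hjK : j ≤ K) (hS : ∀ i ∈ S, j ≤ i ∧ i ≤ K) :
    sval S ≤ phi ^ (K + 2) - phi ^ (j + 1) := by
  rw [← sval_icc j K hjK]
  exact sval_subset fun i hi => Finset.mem_Icc.mpr (hS i hi)

-- lower/upper for max
lemma max_bounds {S : Finset ℤ} {j : ℤ} (hne : S.Nonempty) (hge : ∀ i ∈ S, j ≤ i) :
    phi ^ (S.max' hne) ≤ sval S ∧ sval S ≤ phi ^ (S.max' hne + 2) - phi ^ (j + 1) := by
  constructor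
  · exact le_sval_of_mem (S.max'_mem hne)
  · exact sval_upper (hge _ (S.max'_mem hne))
      (fun i hi => ⟨hge i hi, S.le_max' i hi⟩)

/-- the only representation of φ^j with all indices ≥ j is {j} -/
lemma rep_single {S : Finset ℤ} {j : ℤ} (hge : ∀ i ∈ S, j ≤ i)
    (hv : sval S = phi ^ j) : S = {j} := by
  have hne : S.Nonempty := by
    by_contra h
    rw [Finset.not_nonempty_iff_eq_empty] at h
    rw [h, sval_empty] at hv
    linarith [phi_zpow_pos j]
  set M := S.max' hne with hM
  obtain ⟨hlb, hub⟩ := max_bounds hne hge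
  have hMj : M = j := by
    have h1 : phi ^ M ≤ phi ^ j := hv ▸ hlb
    have h2 := hge M (S.max'_mem hne)
    by_contra h
    exact absurd h1 (not_le.mpr (phi_zpow_lt (by omega)))
  have hMem : j ∈ S := hMj ▸ S.max'_mem hne
  have herase : sval (S.erase j) = 0 := by
    have := sval_erase hMem; rw [hv] at this; linarith
  have hem : S.erase j = ∅ := by
    by_contra h
    rw [← Finset.not_nonempty_iff_eq_empty, not_not] at h
    linarith [sval_pos h]
  ext x
  simp only [Finset.mem_singleton]
  constructor
  · intro hx
    by_contra hxj
    exact absurd (hem ▸ Finset.mem_erase.mpr ⟨hxj, hx⟩) (Finset.notMem_empty x)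
  · rintro rfl; exact hMem

/-- stronger single-value fact: a nonempty rep with indices ≥ j has value ≥ φ^j -/
lemma sval_ge_of_nonempty {S : Finset ℤ} {j : ℤ} (hne : S.Nonempty) (hge : ∀ i ∈ S, j ≤ i) :
    phi ^ j ≤ sval S :=
  le_trans (phi_zpow_le (hge _ (S.max'_mem hne))) (le_sval_of_mem (S.max'_mem hne))

/-- there is no representation of 2·φ^j with all indices ≥ j -/
lemma rep_double {S : Finset ℤ} {j : ℤ} (hge : ∀ i ∈ S, j ≤ i)
    (hv : sval S = 2 * phi ^ j) : False := by
  have hphij := phi_zpow_pos j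
  have hne : S.Nonempty := by
    by_contra h
    rw [Finset.not_nonempty_iff_eq_empty] at h
    rw [h, sval_empty] at hv; linarith
  set M := S.max' hne with hM
  have hMem := S.max'_mem hne
  have hjM : j ≤ M := hge _ hMem
  have hlb : phi ^ M ≤ sval S := le_sval_of_mem hMem
  -- M ≤ j+1 since 2φ^j < φ^(j+2) = φ^(j+1)+φ^j... need 2 < φ^2 i.e. φ^j < φ^(j+1):
  have hup : phi ^ M < phi ^ (j + 2) := by
    have h1 : phi ^ j < phi ^ (j+1) := phi_zpow_lt (by omega)
    have h2 := phi_zpow_rec j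
    linarith
  have hMle : M ≤ j + 1 := by
    by_contra h
    exact absurd hup (not_lt.mpr (phi_zpow_le (by omega)))
  have herase := sval_erase hMem
  obtain hc | hc : M = j ∨ M = j + 1 := by omega
  · -- M = j
    rw [← hM, hc] at herase
    have hgeE : ∀ i ∈ S.erase j, j ≤ i := fun i hi => hge i (Finset.mem_erase.mp hi).2
    have hvE : sval (S.erase j) = phi ^ j := by rw [hv] at herase; linarith
    have hneE : (S.erase j).Nonempty := by
      by_contra h
      rw [Finset.not_nonempty_iff_eq_empty] at h
      rw [h, sval_empty] at hvE; linarith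
    have hge1 : ∀ i ∈ S.erase j, j + 1 ≤ i := by
      intro i hi
      have := (Finset.mem_erase.mp hi).1
      have := hgeE i hi
      omega
    have := sval_ge_of_nonempty hneE hge1
    have := phi_zpow_lt (show j < j + 1 by omega)
    linarith
  · -- M = j+1
    rw [← hM, hc] at herase
    have hgeE : ∀ i ∈ S.erase (j+1), j ≤ i := fun i hi => hge i (Finset.mem_erase.mp hi).2
    have hvE : sval (S.erase (j+1)) = 2 * phi ^ j - phi ^ (j+1) := by
      rw [hv] at herase; linarith
    have h2 := phi_zpow_rec (j-1)
    have h3 := phi_zpow_rec (j-2)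
    rw [show j - 1 + 2 = j + 1 by ring, show j-1+1 = j by ring] at h2
    rw [show j - 2 + 2 = j by ring, show j-2+1 = j-1 by ring] at h3
    have hp1 := phi_zpow_pos (j-1)
    have hp2 := phi_zpow_pos (j-2)
    have hsmall : sval (S.erase (j+1)) < phi ^ j := by rw [hvE]; linarith
    have hneE : (S.erase (j+1)).Nonempty := by
      by_contra h
      rw [Finset.not_nonempty_iff_eq_empty] at h
      rw [h, sval_empty] at hvE
      linarith
    have := sval_ge_of_nonempty hneE hgeE
    linarith

def NA (S : Finset ℤ) : Prop := ∀ i ∈ S, i + 1 ∉ S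

lemma na_bound : ∀ n : ℕ, ∀ S : Finset ℤ, S.card = n → NA S → ∀ K : ℤ, (∀ i ∈ S, i ≤ K) →
    sval S < phi ^ (K + 1) := by
  intro n
  induction n using Nat.strong_induction_on with
  | _ n ih =>
    intro S hcard hNA K hle
    rcases S.eq_empty_or_nonempty with rfl | hne
    · rw [sval_empty]; exact phi_zpow_pos _
    · set M := S.max' hne with hM
      have hMem := S.max'_mem hne
      have hMK : M ≤ K := hle _ hMem
      have herase := sval_erase hMem
      have hE : ∀ i ∈ S.erase M, i ≤ M - 2 := by
        intro i hi
        obtain ⟨hne', hiS⟩ := Finset.mem_erase.mp hi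
        have h1 : i ≤ M := S.le_max' i hiS
        have h2 : i ≠ M - 1 := by
          intro h
          have := hNA i hiS
          rw [h, show M - 1 + 1 = M by ring] at this
          exact this hMem
        omega
      have hcard' : (S.erase M).card < n := by
        rw [← hcard]
        exact Finset.card_erase_lt_of_mem hMem
      have hNAE : NA (S.erase M) := fun i hi h =>
        hNA i (Finset.mem_erase.mp hi).2 (Finset.mem_erase.mp h).2
      have ihE := ih _ hcard' (S.erase M) rfl hNAE (M - 2) hE
      rw [show M - 2 + 1 = M - 1 by ring] at ihE
      have h3 := phi_zpow_rec (M - 1)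
      rw [show M - 1 + 2 = M + 1 by ring, show M - 1 + 1 = M by ring] at h3
      have h4 : phi ^ (M + 1) ≤ phi ^ (K + 1) := phi_zpow_le (by omega)
      linarith

lemma na_unique : ∀ n : ℕ, ∀ S T : Finset ℤ, (S ∪ T).card = n → NA S → NA T →
    sval S = sval T → S = T := by
  intro n
  induction n using Nat.strong_induction_on with
  | _ n ih =>
    intro S T hcard hS hT hv
    rcases (S ∪ T).eq_empty_or_nonempty with hun | hun
    · rw [Finset.union_eq_empty] at hun
      rw [hun.1, hun.2]
    · set K := (S ∪ T).max' hun with hK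
      have hKmem := (S ∪ T).max'_mem hun
      have hle : ∀ i ∈ S ∪ T, i ≤ K := fun i hi => (S ∪ T).le_max' i hi
      have key : ∀ A B : Finset ℤ, NA B → (∀ i ∈ A ∪ B, i ≤ K) → K ∈ A → sval A = sval B →
          K ∈ B := by
        intro A B hB hleAB hKA heq
        by_contra hKB
        have h1 : phi ^ K ≤ sval A := le_sval_of_mem hKA
        have h2 : sval B < phi ^ K := by
          have := na_bound B.card B rfl hB (K - 1) (by
            intro i hi
            have h3 : i ≤ K := hleAB i (Finset.mem_union_right _ hi)
            have : i ≠ K := fun h => hKB (h ▸ hi)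
            omega)
          rw [show K - 1 + 1 = K by ring] at this
          exact this
        linarith
      have hKS : K ∈ S := by
        rcases Finset.mem_union.mp hKmem with h | h
        · exact h
        · exact key T S hS (by rw [Finset.union_comm]; exact hle) h hv.symm
      have hKT : K ∈ T :=
        key S T hT hle hKS hv
      have hv' : sval (S.erase K) = sval (T.erase K) := by
        have e1 := sval_erase hKS
        have e2 := sval_erase hKT
        linarith
      have hNAS : NA (S.erase K) := fun i hi h =>
        hS i (Finset.mem_erase.mp hi).2 (Finset.mem_erase.mp h).2
      have hNAT : NA (T.erase K) := fun i hi h =>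
        hT i (Finset.mem_erase.mp hi).2 (Finset.mem_erase.mp h).2
      have hcard' : ((S.erase K) ∪ (T.erase K)).card < n := by
        rw [← Finset.erase_union_distrib, ← hcard]
        exact Finset.card_erase_lt_of_mem hKmem
      have := ih _ hcard' _ _ rfl hNAS hNAT hv'
      have hSi : S = insert K (S.erase K) := (Finset.insert_erase hKS).symm
      have hTi : T = insert K (T.erase K) := (Finset.insert_erase hKT).symm
      rw [hSi, hTi, this]

noncomputable def uval (j0 : ℤ) (t : ℕ) : ℝ := ∑ i ∈ Finset.range (t+1), phi ^ (j0 + 2*(i:ℤ))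

def evenSet (j0 : ℤ) (t : ℕ) : Finset ℤ := (Finset.range (t+1)).image (fun i : ℕ => j0 + 2*(i:ℤ))

lemma uval_eq (j0 : ℤ) (t : ℕ) : uval j0 t = phi ^ (j0 + 2*(t:ℤ) + 1) - phi ^ (j0 - 1) := by
  induction t with
  | zero =>
    have h := phi_zpow_rec (j0 - 1)
    rw [show j0 - 1 + 2 = j0 + 1 by ring, show j0 - 1 + 1 = j0 by ring] at h
    simp [uval]
    linarith
  | succ t ih =>
    rw [uval, Finset.sum_range_succ, ← uval, ih]
    have h := phi_zpow_rec (j0 + 2*(t:ℤ) + 1)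
    rw [show j0 + 2*(t:ℤ) + 1 + 2 = j0 + 2*((t+1:ℕ):ℤ) + 1 by push_cast; ring,
        show j0 + 2*(t:ℤ) + 1 + 1 = j0 + 2*((t+1:ℕ):ℤ) by push_cast; ring] at h
    linarith

lemma uval_succ (j0 : ℤ) (t : ℕ) :
    uval j0 (t+1) = phi ^ (j0 + 2*((t+1:ℕ):ℤ)) + uval j0 t := by
  rw [uval, Finset.sum_range_succ, ← uval]; ring

lemma sval_evenSet (j0 : ℤ) (t : ℕ) : sval (evenSet j0 t) = uval j0 t := by
  rw [sval_def, evenSet, Finset.sum_image (by intro a _ b _ h; simp only at h; omega)]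
  rfl

lemma evenSet_succ (j0 : ℤ) (t : ℕ) :
    evenSet j0 (t+1) = insert (j0 + 2*((t+1:ℕ):ℤ)) (evenSet j0 t) := by
  rw [evenSet, evenSet, Finset.range_add_one, Finset.image_insert]

lemma mem_evenSet {j0 : ℤ} {t : ℕ} {x : ℤ} :
    x ∈ evenSet j0 t ↔ ∃ i : ℕ, i ≤ t ∧ x = j0 + 2*(i:ℤ) := by
  simp only [evenSet, Finset.mem_image, Finset.mem_range]
  constructor
  · rintro ⟨i, hi, rfl⟩; exact ⟨i, by omega, rfl⟩
  · rintro ⟨i, hi, rfl⟩; exact ⟨i, by omega, rfl⟩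

lemma classA (j0 : ℤ) : ∀ t : ℕ, ∀ S : Finset ℤ, (∀ i ∈ S, j0 ≤ i) →
    sval S = uval j0 t → S = evenSet j0 t := by
  intro t
  induction t with
  | zero =>
    intro S hge hv
    rw [uval_eq] at hv
    have h := phi_zpow_rec (j0 - 1)
    rw [show j0 - 1 + 2 = j0 + 1 by ring, show j0 - 1 + 1 = j0 by ring] at h
    have hv' : sval S = phi ^ j0 := by
      rw [hv, show j0 + 2*((0:ℕ):ℤ) + 1 = j0 + 1 by simp]
      linarith
    rw [rep_single hge hv']
    ext x
    simp only [Finset.mem_singleton, mem_evenSet]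
    constructor
    · rintro rfl; exact ⟨0, le_refl 0, by simp⟩
    · rintro ⟨i, hi, rfl⟩; omega
  | succ t ih =>
    intro S hge hv
    have hvals := uval_eq j0 (t+1)
    have hexp : ((t+1:ℕ):ℤ) = (t:ℤ) + 1 := by push_cast; ring
    have hpos : 0 < uval j0 (t+1) := by
      rw [hvals]
      have : phi ^ (j0 - 1) < phi ^ (j0 + 2*((t+1:ℕ):ℤ) + 1) := phi_zpow_lt (by omega)
      linarith
    have hne : S.Nonempty := by
      by_contra h
      rw [Finset.not_nonempty_iff_eq_empty] at h
      rw [h, sval_empty] at hv; linarith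
    have hMem := S.max'_mem hne
    have hjM : j0 ≤ S.max' hne := hge _ hMem
    obtain ⟨hlb, hub⟩ := max_bounds hne hge
    rw [hv, hvals] at hlb hub
    have hMle : S.max' hne ≤ j0 + 2*((t+1:ℕ):ℤ) := by
      by_contra h
      have h1 : phi ^ (j0 + 2*((t+1:ℕ):ℤ) + 1) ≤ phi ^ (S.max' hne) := phi_zpow_le (by omega)
      have h2 := phi_zpow_pos (j0 - 1)
      linarith
    have hMge : j0 + 2*((t+1:ℕ):ℤ) ≤ S.max' hne := by
      by_contra h
      have h1 : phi ^ (S.max' hne + 2) ≤ phi ^ (j0 + 2*((t+1:ℕ):ℤ) + 1) := phi_zpow_le (by omega)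
      have h2 : phi ^ (j0 - 1) < phi ^ (j0 + 1) := phi_zpow_lt (by omega)
      linarith
    have hMeq : S.max' hne = j0 + 2*((t+1:ℕ):ℤ) := le_antisymm hMle hMge
    have herase := sval_erase hMem
    rw [hv, hMeq] at herase
    rw [hMeq] at hMem
    have hvE : sval (S.erase (j0 + 2*((t+1:ℕ):ℤ))) = uval j0 t := by
      have h5 := uval_succ j0 t
      linarith
    have hgeE : ∀ i ∈ S.erase (j0 + 2*((t+1:ℕ):ℤ)), j0 ≤ i :=
      fun i hi => hge i (Finset.mem_erase.mp hi).2
    have hEeq := ih _ hgeE hvE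
    have hS : S = insert (j0 + 2*((t+1:ℕ):ℤ)) (S.erase (j0 + 2*((t+1:ℕ):ℤ))) :=
      (Finset.insert_erase hMem).symm
    rw [hS, hEeq, evenSet_succ]

def SB (j0 : ℤ) (s t : ℕ) : Finset ℤ :=
  insert j0 (insert (j0 + 2*(s:ℤ)) ((Finset.Ico s t).image (fun r : ℕ => j0 + 2*(r:ℤ) + 1)))

lemma mem_SB {j0 : ℤ} {s t : ℕ} {x : ℤ} :
    x ∈ SB j0 s t ↔ x = j0 ∨ x = j0 + 2*(s:ℤ) ∨ ∃ r : ℕ, s ≤ r ∧ r < t ∧ x = j0 + 2*(r:ℤ) + 1 := by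
  simp only [SB, Finset.mem_insert, Finset.mem_image, Finset.mem_Ico]
  constructor
  · rintro (rfl | rfl | ⟨r, ⟨h1, h2⟩, rfl⟩)
    · left; rfl
    · right; left; rfl
    · right; right; exact ⟨r, h1, h2, rfl⟩
  · rintro (rfl | rfl | ⟨r, h1, h2, rfl⟩)
    · left; rfl
    · right; left; rfl
    · right; right; exact ⟨r, ⟨h1, h2⟩, rfl⟩

lemma oddSum (j0 : ℤ) (s : ℕ) : ∀ t : ℕ, s ≤ t →
    (∑ r ∈ Finset.Ico s t, phi ^ (j0 + 2*(r:ℤ) + 1)) = phi ^ (j0 + 2*(t:ℤ)) - phi ^ (j0 + 2*(s:ℤ)) := by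
  intro t
  induction t with
  | zero =>
    intro h
    have : s = 0 := by omega
    subst this
    simp
  | succ t ih =>
    intro h
    rcases Nat.lt_or_ge s (t+1) with h1 | h1
    · have hst : s ≤ t := by omega
      rw [Finset.sum_Ico_succ_top hst, ih hst]
      have hr := phi_zpow_rec (j0 + 2*(t:ℤ))
      rw [show j0 + 2*(t:ℤ) + 2 = j0 + 2*((t+1:ℕ):ℤ) by push_cast; ring] at hr
      linarith
    · have : s = t + 1 := by omega
      subst this
      simp
lemma sval_SB (j0 : ℤ) {s t : ℕ} (hs : 1 ≤ s) (hst : s ≤ t) :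
    sval (SB j0 s t) = phi ^ (j0 + 2*(t:ℤ)) + phi ^ j0 := by
  have hj0 : j0 ∉ insert (j0 + 2*(s:ℤ)) ((Finset.Ico s t).image (fun r : ℕ => j0 + 2*(r:ℤ) + 1)) := by
    simp only [Finset.mem_insert, Finset.mem_image, Finset.mem_Ico]
    push_neg
    refine ⟨by omega, ?_⟩
    rintro r _
    omega
  have h2s : (j0 + 2*(s:ℤ)) ∉ (Finset.Ico s t).image (fun r : ℕ => j0 + 2*(r:ℤ) + 1) := by
    simp only [Finset.mem_image, Finset.mem_Ico]
    rintro ⟨r, _, h⟩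
    omega
  rw [SB, sval_def, Finset.sum_insert hj0, Finset.sum_insert h2s,
      Finset.sum_image (by intro a _ b _ h; simp only at h; omega)]
  rw [oddSum j0 s t hst]
  ring

lemma SB_insert (j0 : ℤ) {s t : ℕ} (hst : s ≤ t) :
    SB j0 s (t+1) = insert (j0 + 2*(t:ℤ) + 1) (SB j0 s t) := by
  ext x
  simp only [Finset.mem_insert, mem_SB]
  constructor
  · rintro (rfl | rfl | ⟨r, h1, h2, rfl⟩)
    · right; left; rfl
    · right; right; left; rfl
    · rcases Nat.lt_or_ge r t with h3 | h3
      · right; right; right; exact ⟨r, h1, h3, rfl⟩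
      · left; have : r = t := by omega
        subst this; rfl
  · rintro (rfl | rfl | rfl | ⟨r, h1, h2, rfl⟩)
    · right; right; exact ⟨t, by omega, by omega, rfl⟩
    · left; rfl
    · right; left; rfl
    · right; right; exact ⟨r, h1, by omega, rfl⟩

lemma not_mem_SB_top (j0 : ℤ) {s t : ℕ} : (j0 + 2*(t:ℤ) + 1) ∉ SB j0 s t := by
  rw [mem_SB]
  push_neg
  refine ⟨by omega, by omega, ?_⟩
  rintro r _ h
  omega

lemma classB (j0 : ℤ) : ∀ t : ℕ, 1 ≤ t → ∀ S : Finset ℤ, (∀ i ∈ S, j0 ≤ i) →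
    sval S = phi ^ (j0 + 2*(t:ℤ)) + phi ^ j0 →
    ∃ s : ℕ, 1 ≤ s ∧ s ≤ t ∧ S = SB j0 s t := by
  intro t ht
  induction t, ht using Nat.le_induction with
  | base =>
    intro S hge hv
    have hp0 := phi_zpow_pos j0
    have hp2 : phi ^ j0 < phi ^ (j0 + 2*((1:ℕ):ℤ)) := phi_zpow_lt (by omega)
    have hne : S.Nonempty := by
      by_contra h
      rw [Finset.not_nonempty_iff_eq_empty] at h
      rw [h, sval_empty] at hv
      linarith
    have hMem := S.max'_mem hne
    obtain ⟨hlb, hub⟩ := max_bounds hne hge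
    rw [hv] at hlb hub
    have hrec := phi_zpow_rec j0
    -- φ^(j0+2) = φ^(j0+1) + φ^j0 ; note j0 + 2*1 = j0+2
    have e1 : ((1:ℕ):ℤ) = 1 := by norm_num
    rw [e1] at hv hlb hub hp2
    rw [show j0 + 2*(1:ℤ) = j0 + 2 by ring] at hv hlb hub hp2
    have hMle : S.max' hne ≤ j0 + 2 := by
      by_contra h
      have h1 : phi ^ (j0 + 2 + 1) ≤ phi ^ (S.max' hne) := phi_zpow_le (by omega)
      have h2 := phi_zpow_rec (j0 + 1)
      rw [show j0 + 1 + 2 = j0 + 2 + 1 by ring, show j0 + 1 + 1 = j0 + 2 by ring] at h2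
      have h3 : phi ^ j0 < phi ^ (j0 + 1) := phi_zpow_lt (by omega)
      linarith
    have hMge : j0 + 1 ≤ S.max' hne := by
      by_contra h
      have h1 : phi ^ (S.max' hne + 2) ≤ phi ^ (j0 + 2) := phi_zpow_le (by omega)
      have h3 : 0 < phi ^ (j0 + 1) := phi_zpow_pos _
      linarith
    have herase := sval_erase hMem
    rw [hv] at herase
    have hgeE : ∀ i ∈ S.erase (S.max' hne), j0 ≤ i :=
      fun i hi => hge i (Finset.mem_erase.mp hi).2
    obtain hc | hc : S.max' hne = j0 + 1 ∨ S.max' hne = j0 + 2 := by omega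
    · exfalso
      rw [hc] at herase hgeE
      have hvE : sval (S.erase (j0+1)) = 2 * phi ^ j0 := by linarith
      exact rep_double hgeE hvE
    · rw [hc] at herase hgeE hMem
      have hvE : sval (S.erase (j0+2)) = phi ^ j0 := by linarith
      have := rep_single hgeE hvE
      refine ⟨1, le_refl 1, le_refl 1, ?_⟩
      have hS : S = insert (j0+2) (S.erase (j0+2)) := (Finset.insert_erase hMem).symm
      rw [hS, this]
      ext x
      simp only [Finset.mem_insert, Finset.mem_singleton, mem_SB]
      constructor
      · rintro (rfl | rfl)
        · right; left; omega
        · left; rfl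
      · rintro (rfl | h | ⟨r, h1, h2, rfl⟩)
        · right; rfl
        · left; omega
        · omega
  | succ t ht ih =>
    intro S hge hv
    have hp0 := phi_zpow_pos j0
    have e1 : ((t+1:ℕ):ℤ) = (t:ℤ) + 1 := by push_cast; ring
    rw [e1] at hv
    have hp2 : phi ^ j0 < phi ^ (j0 + 2*((t:ℤ)+1) - 1) := phi_zpow_lt (by omega)
    have hne : S.Nonempty := by
      by_contra h
      rw [Finset.not_nonempty_iff_eq_empty] at h
      rw [h, sval_empty] at hv
      have : phi ^ j0 < phi ^ (j0 + 2*((t:ℤ)+1)) := phi_zpow_lt (by omega)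
      linarith
    have hMem := S.max'_mem hne
    obtain ⟨hlb, hub⟩ := max_bounds hne hge
    rw [hv] at hlb hub
    have hMle : S.max' hne ≤ j0 + 2*((t:ℤ)+1) := by
      by_contra h
      have h1 : phi ^ (j0 + 2*((t:ℤ)+1) + 1) ≤ phi ^ (S.max' hne) := phi_zpow_le (by omega)
      have h2 := phi_zpow_rec (j0 + 2*((t:ℤ)+1) - 1)
      rw [show j0 + 2*((t:ℤ)+1) - 1 + 2 = j0 + 2*((t:ℤ)+1) + 1 by ring,
          show j0 + 2*((t:ℤ)+1) - 1 + 1 = j0 + 2*((t:ℤ)+1) by ring] at h2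
      linarith
    have hMge : j0 + 2*((t:ℤ)+1) - 1 ≤ S.max' hne := by
      by_contra h
      have h1 : phi ^ (S.max' hne + 2) ≤ phi ^ (j0 + 2*((t:ℤ)+1)) := phi_zpow_le (by omega)
      have h3 : 0 < phi ^ (j0 + 1) := phi_zpow_pos _
      linarith
    have herase := sval_erase hMem
    rw [hv] at herase
    have hgeE : ∀ i ∈ S.erase (S.max' hne), j0 ≤ i :=
      fun i hi => hge i (Finset.mem_erase.mp hi).2
    obtain hc | hc : S.max' hne = j0 + 2*((t:ℤ)+1) - 1 ∨ S.max' hne = j0 + 2*((t:ℤ)+1) := by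
      omega
    · -- M = j0+2t+1 : recurse
      rw [hc] at herase hgeE hMem
      have h2 := phi_zpow_rec (j0 + 2*(t:ℤ))
      rw [show j0 + 2*(t:ℤ) + 2 = j0 + 2*((t:ℤ)+1) by ring,
          show j0 + 2*(t:ℤ) + 1 = j0 + 2*((t:ℤ)+1) - 1 by ring] at h2
      have hvE : sval (S.erase (j0 + 2*((t:ℤ)+1) - 1)) = phi ^ (j0 + 2*(t:ℤ)) + phi ^ j0 := by
        linarith
      obtain ⟨s, hs1, hs2, hSB⟩ := ih _ hgeE hvE
      refine ⟨s, hs1, by omega, ?_⟩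
      have hS : S = insert (j0 + 2*((t:ℤ)+1) - 1) (S.erase (j0 + 2*((t:ℤ)+1) - 1)) :=
        (Finset.insert_erase hMem).symm
      rw [hS, hSB, SB_insert j0 hs2, show j0 + 2*(t:ℤ) + 1 = j0 + 2*((t:ℤ)+1) - 1 by ring]
    · -- M = j0+2(t+1) : top digit, tail {j0}
      rw [hc] at herase hgeE hMem
      have hvE : sval (S.erase (j0 + 2*((t:ℤ)+1))) = phi ^ j0 := by linarith
      have hEeq := rep_single hgeE hvE
      refine ⟨t+1, by omega, le_refl _, ?_⟩
      have hS : S = insert (j0 + 2*((t:ℤ)+1)) (S.erase (j0 + 2*((t:ℤ)+1))) :=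
        (Finset.insert_erase hMem).symm
      rw [hS, hEeq]
      ext x
      simp only [Finset.mem_insert, Finset.mem_singleton, mem_SB]
      constructor
      · rintro (rfl | rfl)
        · right; left; push_cast; ring
        · left; rfl
      · rintro (rfl | h | ⟨r, h1, h2, rfl⟩)
        · right; rfl
        · left; push_cast at h ⊢; omega
        · omega


def ofS (S : Finset ℤ) : ℤ →₀ ℕ :=
  ⟨S, fun i => if i ∈ S then 1 else 0, by intro a; simp⟩

lemma ofS_apply (S : Finset ℤ) (i : ℤ) : ofS S i = if i ∈ S then 1 else 0 := rfl

lemma ofS_support (S : Finset ℤ) : (ofS S).support = S := rfl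

lemma ofS_injective : Function.Injective ofS := by
  intro S T h
  rw [← ofS_support S, ← ofS_support T, h]

lemma sval_support {a : ℤ →₀ ℕ} (h : ∀ i, a i ≤ 1) :
    (∑ i ∈ a.support, (a i : ℝ) * phi ^ i) = sval a.support := by
  rw [sval_def]
  apply Finset.sum_congr rfl
  intro i hi
  have h1 : a i ≠ 0 := Finsupp.mem_support_iff.mp hi
  have h2 : a i = 1 := by have := h i; omega
  rw [h2]; simp

lemma eq_ofS {a : ℤ →₀ ℕ} (h : ∀ i, a i ≤ 1) : a = ofS a.support := by
  ext i
  rw [ofS_apply]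
  by_cases hi : i ∈ a.support
  · rw [if_pos hi]
    have h1 : a i ≠ 0 := Finsupp.mem_support_iff.mp hi
    have := h i; omega
  · rw [if_neg hi]
    exact Finsupp.notMem_support_iff.mp hi

lemma isPhiRep_ofS {x : ℝ} {S : Finset ℤ} : IsPhiRep x (ofS S) ↔ x = sval S := by
  constructor
  · rintro ⟨h1, h2⟩
    rw [h2, sval_support h1, ofS_support]
  · intro h
    refine ⟨fun i => by rw [ofS_apply]; split <;> omega, ?_⟩
    rw [sval_support (fun i => by rw [ofS_apply]; split <;> omega), ofS_support]
    exact h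

lemma natset_char (d : ℕ → ℤ →₀ ℕ) (hd : ∀ k : ℕ, IsCanonRep k (d k)) (m : ℕ)
    (C : Finset ℤ) (hNA : NA C) (hv : sval C = (m:ℝ)) (j0 : ℤ) (hj0 : j0 ∈ C)
    (hmin : ∀ i ∈ C, j0 ≤ i) :
    naturalSet d m = ofS '' {S : Finset ℤ | sval S = (m:ℝ) ∧ (∀ i ∈ S, j0 ≤ i) ∧ j0 ∈ S} := by
  obtain ⟨⟨hdig, hsum⟩, hadj⟩ := hd m
  have hTNA : NA (d m).support := by
    intro i hi h1
    have := hadj i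
    rw [Finsupp.mem_support_iff] at hi h1
    rcases Nat.mul_eq_zero.mp this with h | h
    · exact hi h
    · exact h1 h
  have hTsupp : (d m).support = C :=
    na_unique _ _ _ rfl hTNA hNA (by rw [← sval_support hdig, ← hsum, hv])
  have hdj0 : d m j0 ≠ 0 := by
    rw [← Finsupp.mem_support_iff, hTsupp]; exact hj0
  have hdmin : ∀ i : ℤ, d m i ≠ 0 → j0 ≤ i := by
    intro i hi
    rw [← Finsupp.mem_support_iff, hTsupp] at hi
    exact hmin i hi
  ext a
  simp only [naturalSet, Set.mem_setOf_eq, Set.mem_image]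
  constructor
  · rintro ⟨⟨hdig', hsum'⟩, j, ⟨haj, hamin⟩, ⟨hdj, hdmin'⟩⟩
    have hjj0 : j = j0 := le_antisymm (hdmin' j0 hdj0) (hdmin j hdj)
    subst hjj0
    refine ⟨a.support, ⟨?_, ?_, ?_⟩, (eq_ofS hdig').symm⟩
    · rw [← sval_support hdig', ← hsum']
    · intro i hi
      exact hamin i (Finsupp.mem_support_iff.mp hi)
    · exact Finsupp.mem_support_iff.mpr haj
  · rintro ⟨S, ⟨hvS, hge, hj0S⟩, rfl⟩
    refine ⟨isPhiRep_ofS.mpr hvS.symm, j0, ⟨?_, ?_⟩, hdj0, hdmin⟩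
    · rw [ofS_apply, if_pos hj0S]; omega
    · intro i hi
      rw [ofS_apply] at hi
      by_cases h : i ∈ S
      · exact hge i h
      · rw [if_neg h] at hi; omega


lemma NA_evenSet (j0 : ℤ) (t : ℕ) : NA (evenSet j0 t) := by
  intro i hi h1
  rw [mem_evenSet] at hi h1
  obtain ⟨a, _, ha⟩ := hi
  obtain ⟨b, _, hb⟩ := h1
  omega

lemma j0_mem_evenSet (j0 : ℤ) (t : ℕ) : j0 ∈ evenSet j0 t :=
  mem_evenSet.mpr ⟨0, by omega, by simp⟩

lemma evenSet_ge (j0 : ℤ) (t : ℕ) : ∀ i ∈ evenSet j0 t, j0 ≤ i := by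
  intro i hi
  obtain ⟨a, _, ha⟩ := mem_evenSet.mp hi
  omega

lemma j0_mem_SB (j0 : ℤ) (s t : ℕ) : j0 ∈ SB j0 s t := mem_SB.mpr (Or.inl rfl)

lemma SB_ge (j0 : ℤ) (s t : ℕ) : ∀ i ∈ SB j0 s t, j0 ≤ i := by
  intro i hi
  rcases mem_SB.mp hi with rfl | rfl | ⟨r, _, _, rfl⟩ <;> omega

lemma NA_SB_top (j0 : ℤ) (t : ℕ) (_ht : 1 ≤ t) : NA (SB j0 t t) := by
  intro i hi h1
  rcases mem_SB.mp hi with rfl | rfl | ⟨r, h2, h3, rfl⟩ <;>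
    rcases mem_SB.mp h1 with h4 | h4 | ⟨r', h5, h6, h7⟩ <;> omega

/-- For `n ≥ 1`, the sets of natural expansions of `L_{2n+1}` and of `L_{2n}` are
finite, `ν(L_{2n+1}) = 1`, and `ν(L_{2n}) = 2n`. Here `d n` denotes the canonical
φ-representation of `n`. -/
theorem natural_count_lucas
    (d : ℕ → ℤ →₀ ℕ) (hd : ∀ n : ℕ, IsCanonRep n (d n)) (n : ℕ) (hn : 1 ≤ n) :
    (naturalSet d (lucas (2 * n + 1))).Finite ∧
      (naturalSet d (lucas (2 * n))).Finite ∧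
      (naturalSet d (lucas (2 * n + 1))).ncard = 1 ∧
      (naturalSet d (lucas (2 * n))).ncard = 2 * n := by
  set j0 : ℤ := -(2*(n:ℤ)) with hj0def
  -- odd case
  have huval : uval j0 (2*n) = ((lucas (2*n+1) : ℕ) : ℝ) := by
    rw [uval_eq, lucas_odd_real]
    rw [show j0 + 2*((2*n:ℕ):ℤ) + 1 = 2*(n:ℤ)+1 by push_cast; ring,
        show j0 - 1 = -(2*(n:ℤ)) - 1 by ring]
  have hCodd : sval (evenSet j0 (2*n)) = ((lucas (2*n+1) : ℕ) : ℝ) := by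
    rw [sval_evenSet, huval]
  have hodd := natset_char d hd (lucas (2*n+1)) (evenSet j0 (2*n)) (NA_evenSet j0 (2*n))
    hCodd j0 (j0_mem_evenSet j0 (2*n)) (evenSet_ge j0 (2*n))
  have hsetodd : {S : Finset ℤ | sval S = ((lucas (2*n+1) : ℕ) : ℝ) ∧ (∀ i ∈ S, j0 ≤ i) ∧ j0 ∈ S}
      = {evenSet j0 (2*n)} := by
    ext S
    simp only [Set.mem_setOf_eq, Set.mem_singleton_iff]
    constructor
    · rintro ⟨h1, h2, _⟩
      exact classA j0 (2*n) S h2 (by rw [h1, huval])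
    · rintro rfl
      exact ⟨hCodd, evenSet_ge j0 (2*n), j0_mem_evenSet j0 (2*n)⟩
  rw [hodd, hsetodd]
  -- even case
  have hvSB : ∀ s : ℕ, 1 ≤ s → s ≤ 2*n → sval (SB j0 s (2*n)) = ((lucas (2*n) : ℕ) : ℝ) := by
    intro s h1 h2
    rw [sval_SB j0 h1 h2, lucas_even_real]
    rw [show j0 + 2*((2*n:ℕ):ℤ) = 2*(n:ℤ) by push_cast; ring]
  have hCeven : sval (SB j0 (2*n) (2*n)) = ((lucas (2*n) : ℕ) : ℝ) :=
    hvSB (2*n) (by omega) (le_refl _)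
  have heven := natset_char d hd (lucas (2*n)) (SB j0 (2*n) (2*n))
    (NA_SB_top j0 (2*n) (by omega)) hCeven j0 (j0_mem_SB j0 (2*n) (2*n)) (SB_ge j0 (2*n) (2*n))
  have hseteven : {S : Finset ℤ | sval S = ((lucas (2*n) : ℕ) : ℝ) ∧ (∀ i ∈ S, j0 ≤ i) ∧ j0 ∈ S}
      = (fun s : ℕ => SB j0 s (2*n)) '' Set.Icc 1 (2*n) := by
    ext S
    simp only [Set.mem_setOf_eq, Set.mem_image, Set.mem_Icc]
    constructor
    · rintro ⟨h1, h2, _⟩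
      obtain ⟨s, hs1, hs2, rfl⟩ := classB j0 (2*n) (by omega) S h2 (by
        rw [h1, lucas_even_real, show j0 + 2*((2*n:ℕ):ℤ) = 2*(n:ℤ) by push_cast; ring])
      exact ⟨s, ⟨hs1, hs2⟩, rfl⟩
    · rintro ⟨s, ⟨hs1, hs2⟩, rfl⟩
      exact ⟨hvSB s hs1 hs2, SB_ge j0 s (2*n), j0_mem_SB j0 s (2*n)⟩
  rw [heven, hseteven]
  have hinj : Set.InjOn (fun s : ℕ => SB j0 s (2*n)) (Set.Icc 1 (2*n)) := by
    intro s hs s' hs' h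
    simp only [Set.mem_Icc] at hs hs'
    have h' : SB j0 s (2*n) = SB j0 s' (2*n) := h
    have h1 : (j0 + 2*(s:ℤ)) ∈ SB j0 s' (2*n) := by
      rw [← h']
      exact mem_SB.mpr (Or.inr (Or.inl rfl))
    rcases mem_SB.mp h1 with h2 | h2 | ⟨r, _, _, h2⟩ <;> omega
  refine ⟨(Set.finite_singleton _).image _, ((Set.finite_Icc 1 (2*n)).image _).image _, ?_, ?_⟩
  · rw [Set.image_singleton, Set.ncard_singleton]
  · rw [Set.ncard_image_of_injective _ ofS_injective,
        Set.ncard_image_of_injOn hinj, ← Finset.coe_Icc, Set.ncard_coe_finset,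
        Nat.card_Icc]
    omega
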